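/- Let z : [-1,1] → ℝ be twice continuously differentiable and satisfy L[z](x) ≥ 0 for all x ∈ [-1,1]. Then z(x) ≥ 0 for all x ∈ [-1,1]. (Weak maximum principle for the linearized generalized-apparent-horizon operator, used in the Kruskal counterexample to the Bray–Khuri Penrose inequality to prove positivity of the first-order horizon profiles.) -/

import Mathlib

open Set Filter Topology

/-- The linearized generalized-apparent-horizon operator
`L[z](x) = -(1 - x²) z''(x) + 2x z'(x) + z(x)`, written in terms of
given derivative functions `z'`, `z''`. -/
noncomputable def Lop (z z' z'' : ℝ → ℝ) (x : ℝ) : ℝ :=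
  -(1 - x ^ 2) * z'' x + 2 * x * z' x + z x

/-- `z` is twice continuously differentiable on `[-1,1]`, with first derivative `z'`
and second derivative `z''`. -/
def IsC2On (z z' z'' : ℝ → ℝ) : Prop :=
  (∀ x ∈ Icc (-1 : ℝ) 1, HasDerivWithinAt z (z' x) (Icc (-1 : ℝ) 1) x) ∧
  (∀ x ∈ Icc (-1 : ℝ) 1, HasDerivWithinAt z' (z'' x) (Icc (-1 : ℝ) 1) x) ∧
  ContinuousOn z'' (Icc (-1 : ℝ) 1)

/-- If `g x₀ = 0` and `g` has negative derivative at `x₀`, then `g < 0` just to the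
right of `x₀`. -/
lemma neg_right_of_hasDerivAt_neg {g : ℝ → ℝ} {x₀ c : ℝ} (h0 : g x₀ = 0) (hc : c < 0)
    (hd : HasDerivAt g c x₀) : ∀ᶠ x in 𝓝[>] x₀, g x < 0 := by
  have ht : Filter.Tendsto (slope g x₀) (𝓝[>] x₀) (𝓝 c) :=
    (hasDerivAt_iff_tendsto_slope.1 hd).mono_left
      (nhdsWithin_mono _ (fun y hy => ne_of_gt hy))
  filter_upwards [ht.eventually (gt_mem_nhds hc), self_mem_nhdsWithin] with y hy hy'
  rw [slope_def_field, h0, sub_zero] at hy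
  have hyx : (0:ℝ) < y - x₀ := sub_pos.2 hy'
  rcases div_neg_iff.1 hy with ⟨_, h2⟩ | ⟨h1, _⟩
  · linarith
  · exact h1

/-- Weak maximum principle for the operator `L`: if `L[z] ≥ 0` on `[-1,1]`,
then `z ≥ 0` on `[-1,1]`. -/
theorem weak_maximum_principle_Lop (z z' z'' : ℝ → ℝ)
    (hC2 : IsC2On z z' z'')
    (hL : ∀ x ∈ Icc (-1 : ℝ) 1, 0 ≤ Lop z z' z'' x) :
    ∀ x ∈ Icc (-1 : ℝ) 1, 0 ≤ z x := by
  obtain ⟨hz, hz', _⟩ := hC2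
  have hzc : ContinuousOn z (Icc (-1 : ℝ) 1) := fun x hx => (hz x hx).continuousWithinAt
  obtain ⟨x₀, hx₀, hmin⟩ := isCompact_Icc.exists_isMinOn (α := ℝ)
    ⟨1, by norm_num⟩ hzc
  intro x hx
  by_contra hneg
  push_neg at hneg
  have hz0 : z x₀ < 0 := lt_of_le_of_lt (hmin hx) hneg
  have hL0 := hL x₀ hx₀
  unfold Lop at hL0
  have hlocmin : IsLocalMinOn z (Icc (-1 : ℝ) 1) x₀ := hmin.filter_mono inf_le_right
  rcases eq_or_lt_of_le hx₀.1 with h1 | h1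
  · -- x₀ = -1
    subst h1
    have hy : (1:ℝ) ∈ posTangentConeAt (Icc (-1 : ℝ) 1) (-1) := by
      apply mem_posTangentConeAt_of_segment_subset
      rw [show (-1:ℝ) + 1 = 0 by norm_num, segment_eq_Icc (by norm_num : (-1:ℝ) ≤ 0)]
      exact Icc_subset_Icc le_rfl (by norm_num)
    have := hlocmin.hasFDerivWithinAt_nonneg
      (hasDerivWithinAt_iff_hasFDerivWithinAt.1 (hz _ hx₀)) hy
    simp only [ContinuousLinearMap.smulRight_apply, ContinuousLinearMap.one_apply, ContinuousLinearMap.toSpanSingleton_apply,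
      smul_eq_mul, one_mul] at this
    nlinarith
  rcases eq_or_lt_of_le hx₀.2 with h2 | h2
  · -- x₀ = 1
    subst h2
    have hy : (-1:ℝ) ∈ posTangentConeAt (Icc (-1 : ℝ) 1) 1 := by
      apply mem_posTangentConeAt_of_segment_subset
      rw [show (1:ℝ) + -1 = 0 by norm_num, segment_symm, segment_eq_Icc (by norm_num : (0:ℝ) ≤ 1)]
      exact Icc_subset_Icc (by norm_num) le_rfl
    have := hlocmin.hasFDerivWithinAt_nonneg
      (hasDerivWithinAt_iff_hasFDerivWithinAt.1 (hz _ hx₀)) hy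
    simp only [ContinuousLinearMap.smulRight_apply, ContinuousLinearMap.one_apply, ContinuousLinearMap.toSpanSingleton_apply,
      smul_eq_mul] at this
    nlinarith
  · -- interior
    have hnhds : Icc (-1 : ℝ) 1 ∈ 𝓝 x₀ := Icc_mem_nhds h1 h2
    have hdz : HasDerivAt z (z' x₀) x₀ := (hz x₀ hx₀).hasDerivAt hnhds
    have hz'0 : z' x₀ = 0 := (hmin.isLocalMin hnhds).hasDerivAt_eq_zero hdz
    have hz''0 : 0 ≤ z'' x₀ := by
      by_contra hcon
      push_neg at hcon
      have hdz' : HasDerivAt z' (z'' x₀) x₀ := (hz' x₀ hx₀).hasDerivAt hnhds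
      have hev := neg_right_of_hasDerivAt_neg hz'0 hcon hdz'
      rw [eventually_nhdsWithin_iff] at hev
      obtain ⟨l, u, hmem, hsub⟩ := mem_nhds_iff_exists_Ioo_subset.1 hev
      set b := min u 1 with hb
      have hx₀b : x₀ < b := lt_min hmem.2 h2
      have hbI : b ≤ 1 := min_le_right _ _
      have hDsub : Icc x₀ b ⊆ Icc (-1 : ℝ) 1 := Icc_subset_Icc hx₀.1 hbI
      have hanti : StrictAntiOn z (Icc x₀ b) := by
        apply strictAntiOn_of_hasDerivWithinAt_neg (f' := z') (convex_Icc _ _)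
          (hzc.mono hDsub)
        · intro y hy
          rw [interior_Icc] at hy
          exact (hz y (hDsub (Ioo_subset_Icc_self hy))).mono
            (subset_trans (subset_trans interior_Icc.subset Ioo_subset_Icc_self) hDsub)
        · intro y hy
          rw [interior_Icc] at hy
          exact hsub ⟨hmem.1.trans hy.1, hy.2.trans_le (min_le_left _ _)⟩ hy.1
      have hlt : z b < z x₀ :=
        hanti (left_mem_Icc.2 hx₀b.le) (right_mem_Icc.2 hx₀b.le) hx₀b
      have : z x₀ ≤ z b := hmin ⟨le_trans hx₀.1 hx₀b.le, hbI⟩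
      linarith
    have hpos : 0 < 1 - x₀ ^ 2 := by nlinarith
    nlinarith
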